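/- arXiv:2110.02175 — 2 statements merged into one kernel-verified Lean document; each statement's English description precedes it below -/
import Mathlib

section
/- (Delsarte–Hoffman / ratio bound) Let B be a real symmetric matrix indexed by the vertices of a graph X such that B(u,v) = 0 whenever u ≠ v and u is not adjacent to v. Suppose B has constant row sum d and least eigenvalue τ < 0 with d > 0. Then every coclique (independent set) S of X satisfies |S| ≤ |V(X)| / (1 - d/τ). -/
open Finset

open Matrix in
/-- The Delsarte–Hoffman (ratio) bound: if `B` is a symmetric weighted adjacency matrix
of the graph `X` (zero diagonal, supported on adjacent pairs) with constant row sum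
`d > 0` and least eigenvalue `τ < 0`, then any coclique `S` of `X` satisfies
`|S| ≤ |V| / (1 - d/τ)`. -/
theorem ratio_bound {V : Type*} [Fintype V] (X : SimpleGraph V) (B : Matrix V V ℝ)
    (hsymm : B.IsSymm) (hdiag : ∀ v, B v v = 0)
    (hsupp : ∀ u v, u ≠ v → ¬X.Adj u v → B u v = 0)
    (d τ : ℝ) (hd : 0 < d) (hτ : τ < 0)
    (hrow : ∀ u, ∑ v, B u v = d)
    (hτeig : ∃ x : V → ℝ, x ≠ 0 ∧ B.mulVec x = τ • x)
    (hτleast : ∀ μ : ℝ, (∃ x : V → ℝ, x ≠ 0 ∧ B.mulVec x = μ • x) → τ ≤ μ)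
    (S : Finset V) (hS : ∀ u ∈ S, ∀ v ∈ S, ¬X.Adj u v) :
    (S.card : ℝ) ≤ (Fintype.card V : ℝ) / (1 - d / τ) := by
  classical
  have hdτ : d / τ < 0 := div_neg_of_pos_of_neg hd hτ
  have h1 : (0:ℝ) < 1 - d / τ := by linarith
  have hBsymm : ∀ u v, B u v = B v u := fun u v => (congrFun (congrFun hsymm v) u : _)
  have hcol : ∀ v, ∑ u, B u v = d := fun v => by
    rw [Finset.sum_congr rfl fun u _ => hBsymm u v]; exact hrow v
  have hHerm : B.IsHermitian := by
    rw [Matrix.IsHermitian, Matrix.conjTranspose_eq_transpose_of_trivial]; exact hsymm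
  -- the shifted matrix B - τ•1 is PSD
  set C : Matrix V V ℝ := B - τ • 1 with hC
  have hCHerm : C.IsHermitian := by
    apply hHerm.sub
    rw [Matrix.IsHermitian, Matrix.conjTranspose_eq_transpose_of_trivial]
    rw [Matrix.transpose_smul, Matrix.transpose_one]
  have hCmul : ∀ x : V → ℝ, C.mulVec x = B.mulVec x - τ • x := fun x => by
    rw [hC, Matrix.sub_mulVec, Matrix.smul_mulVec, Matrix.one_mulVec]
  have hPSD : C.PosSemidef := by
    apply hCHerm.posSemidef_iff_eigenvalues_nonneg.mpr
    intro i
    show (0:ℝ) ≤ _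
    set v : V → ℝ := ⇑(hCHerm.eigenvectorBasis i) with hvdef
    have hv : C.mulVec v = hCHerm.eigenvalues i • v := hCHerm.mulVec_eigenvectorBasis i
    have hvne : v ≠ 0 := by
      intro h
      apply hCHerm.eigenvectorBasis.toBasis.ne_zero i
      ext w
      exact congrFun h w
    have hBv : B.mulVec v = (hCHerm.eigenvalues i + τ) • v := by
      have h2 := hCmul v
      rw [hv] at h2
      rw [add_smul]
      exact sub_eq_iff_eq_add.mp h2.symm
    have := hτleast (hCHerm.eigenvalues i + τ) ⟨v, hvne, hBv⟩
    linarith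
  have key : ∀ x : V → ℝ, τ * (x ⬝ᵥ x) ≤ x ⬝ᵥ B.mulVec x := by
    intro x
    have h0 := hPSD.dotProduct_mulVec_nonneg x
    rw [hCmul, dotProduct_sub, dotProduct_smul] at h0
    simp only [star_trivial, smul_eq_mul] at h0
    linarith
  set s : ℝ := (S.card : ℝ) with hs
  set n : ℝ := (Fintype.card V : ℝ) with hn
  rcases S.eq_empty_or_nonempty with hSe | hSne
  · subst hSe
    simp only [hs, Finset.card_empty, Nat.cast_zero]
    positivity
  · have hn0 : 0 < n := by
      rw [hn]
      have : 0 < Fintype.card V := Fintype.card_pos_iff.mpr ⟨hSne.choose⟩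
      exact_mod_cast this
    have hs0 : 0 < s := by
      rw [hs]
      exact_mod_cast Finset.card_pos.mpr hSne
    have hne : n ≠ 0 := ne_of_gt hn0
    set c : ℝ := s / n with hc
    set x : V → ℝ := fun v => (if v ∈ S then (1:ℝ) else 0) - c with hx
    have hBzero : ∀ u ∈ S, ∀ v ∈ S, B u v = 0 := by
      intro u hu v hv
      by_cases huv : u = v
      · subst huv; exact hdiag u
      · exact hsupp u v huv (hS u hu v hv)
    have hmul : B.mulVec x = fun u => (∑ v ∈ S, B u v) - c * d := by
      funext u
      rw [Matrix.mulVec, hx]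
      simp only [dotProduct, mul_sub, Finset.sum_sub_distrib, mul_ite, mul_one, mul_zero]
      rw [Finset.sum_ite_mem, Finset.univ_inter, ← Finset.sum_mul, hrow, mul_comm d c]
    have hquad : x ⬝ᵥ B.mulVec x = -2*c*s*d + c^2*n*d := by
      rw [hmul]
      simp only [dotProduct, hx]
      have he : ∀ u : V, ((if u ∈ S then (1:ℝ) else 0) - c) * ((∑ v ∈ S, B u v) - c * d)
          = ((if u ∈ S then (∑ v ∈ S, B u v) else 0) - (if u ∈ S then c*d else 0))
            - c * (∑ v ∈ S, B u v) + c * (c * d) := by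
        intro u
        by_cases hu : u ∈ S <;> simp [hu] <;> ring
      rw [Finset.sum_congr rfl fun u _ => he u]
      simp only [Finset.sum_add_distrib, Finset.sum_sub_distrib, Finset.sum_ite_mem,
        Finset.univ_inter, Finset.sum_const, nsmul_eq_mul, ← Finset.mul_sum]
      have hA1 : ∑ u ∈ S, ∑ v ∈ S, B u v = 0 :=
        Finset.sum_eq_zero fun u hu => Finset.sum_eq_zero fun v hv => hBzero u hu v hv
      have hA3 : ∑ u : V, ∑ v ∈ S, B u v = s * d := by
        rw [show (∑ u : V, ∑ v ∈ S, B u v) = ∑ v ∈ S, ∑ u : V, B u v from Finset.sum_comm, Finset.sum_congr rfl fun v _ => hcol v, Finset.sum_const,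
          nsmul_eq_mul, hs]
      rw [hA1, hA3, hc]
      simp only [Finset.card_univ, ← hn, ← hs]
      field_simp
      ring
    have hnorm : x ⬝ᵥ x = s - 2*c*s + n*c^2 := by
      simp only [dotProduct, hx]
      have he : ∀ u : V, ((if u ∈ S then (1:ℝ) else 0) - c) * ((if u ∈ S then (1:ℝ) else 0) - c)
          = (if u ∈ S then (1:ℝ) else 0) - 2 * (if u ∈ S then c else 0) + c^2 := by
        intro u
        by_cases hu : u ∈ S <;> simp [hu] <;> ring
      rw [Finset.sum_congr rfl fun u _ => he u]
      simp only [Finset.sum_add_distrib, Finset.sum_sub_distrib, Finset.sum_ite_mem,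
        Finset.univ_inter, Finset.sum_const, nsmul_eq_mul, ← Finset.mul_sum]
      rw [hc]
      simp only [Finset.card_univ, ← hn, ← hs]
      field_simp
    have hkey := key x
    rw [hquad, hnorm, hc] at hkey
    have h2 : τ * (s * n - s^2) ≤ - s^2 * d := by
      have h2' : n * (τ * (s - 2*(s/n)*s + n*(s/n)^2)) ≤ n * (-2*(s/n)*s*d + (s/n)^2*n*d) :=
        mul_le_mul_of_nonneg_left hkey (le_of_lt hn0)
      have e1 : n * (τ * (s - 2*(s/n)*s + n*(s/n)^2)) = τ * (s*n - 2*s^2 + s^2) := by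
        field_simp
      have e2 : n * (-2*(s/n)*s*d + (s/n)^2*n*d) = -2*s^2*d + s^2*d := by
        field_simp
      rw [e1, e2] at h2'
      nlinarith [h2']
    have h3 : τ * n ≤ s * (τ - d) := by
      have h4 : s * (τ * n) ≤ s * (s * (τ - d)) := by nlinarith
      exact le_of_mul_le_mul_left h4 hs0
    rw [le_div_iff₀ h1]
    have heq : 1 - d / τ = (τ - d) / τ := by
      rw [sub_div, div_self (ne_of_lt hτ)]
    rw [heq, mul_div_assoc', div_le_iff_of_neg hτ]
    nlinarith [h3]
end

section
/- In the equality case of the ratio bound: with B, d, τ as above, if a coclique S satisfies |S| = |V(X)|/(1 - d/τ), then the vector ν_S - (|S|/|V(X)|)·1 is an eigenvector of B with eigenvalue τ, where ν_S is the characteristic vector of S. -/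
open Finset
open Matrix

/-- Equality case of the Delsarte–Hoffman (ratio) bound: if a coclique `S` attains the
bound `|S| = |V| / (1 - d/τ)`, then `ν_S - (|S|/|V|)·𝟙` is an eigenvector of `B` with
eigenvalue `τ`. -/
theorem ratio_bound_equality {V : Type*} [Fintype V] [DecidableEq V] (X : SimpleGraph V)
    (B : Matrix V V ℝ)
    (hsymm : B.IsSymm) (hdiag : ∀ v, B v v = 0)
    (hsupp : ∀ u v, u ≠ v → ¬X.Adj u v → B u v = 0)
    (d τ : ℝ) (hd : 0 < d) (hτ : τ < 0)
    (hrow : ∀ u, ∑ v, B u v = d)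
    (hτeig : ∃ x : V → ℝ, x ≠ 0 ∧ B.mulVec x = τ • x)
    (hτleast : ∀ μ : ℝ, (∃ x : V → ℝ, x ≠ 0 ∧ B.mulVec x = μ • x) → τ ≤ μ)
    (S : Finset V) (hS : ∀ u ∈ S, ∀ v ∈ S, ¬X.Adj u v)
    (heq : (S.card : ℝ) = (Fintype.card V : ℝ) / (1 - d / τ)) :
    B.mulVec (fun v => (if v ∈ S then (1 : ℝ) else 0) - S.card / Fintype.card V) =
      τ • (fun v => (if v ∈ S then (1 : ℝ) else 0) - S.card / Fintype.card V) := by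
  classical
  -- nonempty V
  have hne : Nonempty V := by
    by_contra h
    rw [not_nonempty_iff] at h
    obtain ⟨x, hx0, -⟩ := hτeig
    exact hx0 (funext fun v => (h.false v).elim)
  set n : ℝ := (Fintype.card V : ℝ) with hn
  have hnpos : 0 < n := by
    rw [hn]; exact_mod_cast Fintype.card_pos
  set s : ℝ := (S.card : ℝ) with hs
  have hcard : ((Finset.univ : Finset V).card : ℝ) = n := by
    rw [hn, Finset.card_univ]
  set z : V → ℝ := fun v => (if v ∈ S then (1 : ℝ) else 0) - s / n with hz
  -- B is Hermitian
  have hherm : B.IsHermitian := by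
    rwa [Matrix.IsHermitian, Matrix.conjTranspose_eq_transpose_of_trivial]
  -- M := B - τ • 1 is Hermitian
  set M : Matrix V V ℝ := B - τ • (1 : Matrix V V ℝ) with hM
  have hMherm : M.IsHermitian := by
    apply hherm.sub
    simp [Matrix.IsHermitian]
  -- M is PSD
  have hMpsd : M.PosSemidef := by
    apply hMherm.posSemidef_iff_eigenvalues_nonneg.mpr
    intro i
    show 0 ≤ hMherm.eigenvalues i
    set v : V → ℝ := ⇑(hMherm.eigenvectorBasis i) with hv
    have hv0 : v ≠ 0 := by
      have := hMherm.eigenvectorBasis.orthonormal.ne_zero i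
      intro h
      apply this
      ext j
      exact congrFun h j
    have hMv : M.mulVec v = hMherm.eigenvalues i • v := hMherm.mulVec_eigenvectorBasis i
    have hBv : B.mulVec v = (hMherm.eigenvalues i + τ) • v := by
      have : B.mulVec v = M.mulVec v + τ • v := by
        rw [hM, Matrix.sub_mulVec, Matrix.smul_mulVec, Matrix.one_mulVec]
        ring_nf
      rw [this, hMv, add_smul]
    have := hτleast (hMherm.eigenvalues i + τ) ⟨v, hv0, hBv⟩
    linarith
  -- column sums equal d
  have hcol : ∀ v, ∑ u, B u v = d := by
    intro v
    have : ∀ u, B u v = B v u := fun u => by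
      conv_lhs => rw [← hsymm]
      rfl
    simp_rw [this]
    exact hrow v
  -- B vanishes on S × S
  have hSS : ∀ u ∈ S, ∀ v ∈ S, B u v = 0 := by
    intro u hu v hv
    by_cases huv : u = v
    · subst huv; exact hdiag u
    · exact hsupp u v huv (hS u hu v hv)
  -- mulVec formula
  have hmul : ∀ u, B.mulVec z u = (∑ v ∈ S, B u v) - (s / n) * d := by
    intro u
    simp only [Matrix.mulVec, dotProduct, hz]
    rw [Finset.sum_congr rfl (fun v _ => mul_sub (B u v) _ _), Finset.sum_sub_distrib]
    congr 1
    · rw [Finset.sum_congr rfl (fun v _ => by rw [mul_ite, mul_one, mul_zero]),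
        Finset.sum_ite_mem, Finset.univ_inter]
    · rw [← Finset.sum_mul, hrow, mul_comm]
  -- the quadratic form of B at z
  have hBquad : z ⬝ᵥ B.mulVec z = -(d * s * s / n) := by
    have h1 : ∑ u, ∑ v ∈ S, B u v = d * s := by
      rw [Finset.sum_comm (f := fun u v => B u v)]
      rw [Finset.sum_congr rfl (fun v _ => hcol v)]
      simp [hs, mul_comm]
    have h2 : ∑ u ∈ S, ∑ v ∈ S, B u v = 0 :=
      Finset.sum_eq_zero fun u hu => Finset.sum_eq_zero fun v hv => hSS u hu v hv
    simp only [dotProduct, hz]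
    rw [Finset.sum_congr rfl (fun u _ => by rw [hmul u, sub_mul])]
    rw [Finset.sum_sub_distrib]
    have e1 : ∑ u, (if u ∈ S then (1:ℝ) else 0) * ((∑ v ∈ S, B u v) - s / n * d)
        = -(s / n * d * s) := by
      rw [Finset.sum_congr rfl (fun u _ => by rw [ite_mul, one_mul, zero_mul]),
        Finset.sum_ite_mem, Finset.univ_inter]
      rw [Finset.sum_sub_distrib, h2, Finset.sum_const, nsmul_eq_mul, ← hs]
      ring
    have e2 : ∑ u, (s / n) * ((∑ v ∈ S, B u v) - s / n * d)
        = s / n * (d * s) - s / n * (s / n * d) * n := by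
      rw [← Finset.mul_sum, Finset.sum_sub_distrib, h1, Finset.sum_const, nsmul_eq_mul, hcard]
      ring
    rw [e1, e2]
    field_simp
    ring
  -- the norm of z
  have hzz : z ⬝ᵥ z = s - s * s / n := by
    simp only [dotProduct, hz]
    have : ∀ u, ((if u ∈ S then (1:ℝ) else 0) - s / n) * ((if u ∈ S then (1:ℝ) else 0) - s / n)
        = (if u ∈ S then (1:ℝ) else 0) - 2 * (s/n) * (if u ∈ S then (1:ℝ) else 0) + (s/n)^2 := by
      intro u
      by_cases h : u ∈ S <;> simp [h] <;> ring
    rw [Finset.sum_congr rfl fun u _ => this u]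
    rw [Finset.sum_add_distrib, Finset.sum_sub_distrib, Finset.sum_const, nsmul_eq_mul,
      ← Finset.mul_sum]
    simp only [Finset.sum_ite_mem, Finset.univ_inter, Finset.sum_const, nsmul_eq_mul, mul_one]
    rw [hcard]
    field_simp
    ring
  -- key algebraic identity from heq
  have hkey : s * τ - s * d = n * τ := by
    have h1 : (1 : ℝ) - d / τ > 0 := by
      have : d / τ < 0 := div_neg_of_pos_of_neg hd hτ
      linarith
    have hτ0 : τ ≠ 0 := ne_of_lt hτ
    have := heq
    rw [eq_div_iff (ne_of_gt h1)] at this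
    have h2 : s * (1 - d / τ) * τ = n * τ := by rw [this]
    field_simp at h2
    linarith [h2]
  -- quadratic form of M at z is zero
  have hMquad : z ⬝ᵥ M.mulVec z = 0 := by
    rw [hM, Matrix.sub_mulVec, dotProduct_sub, Matrix.smul_mulVec,
      Matrix.one_mulVec, dotProduct_smul, hBquad, hzz]
    have hn0 : n ≠ 0 := ne_of_gt hnpos
    have hn0' : n ≠ 0 := hn0
    field_simp
    linear_combination (s * n - (n - 1) * s) * hkey + (s ^ 2 * τ - s * n * τ) * (mul_inv_cancel₀ hn0)
  -- conclude
  have hMz : M.mulVec z = 0 := by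
    have := (hMpsd.dotProduct_mulVec_zero_iff z).mp ?_
    · exact this
    · simpa using hMquad
  have : B.mulVec z - τ • z = 0 := by
    have := hMz
    rwa [hM, Matrix.sub_mulVec, Matrix.smul_mulVec, Matrix.one_mulVec] at this
  have hfin : B.mulVec z = τ • z := by
    have := sub_eq_zero.mp this
    exact this
  convert hfin using 2
end
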